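/- Let V be a type and let d : V → V → ℝ satisfy the directed triangle inequality d(a,c) ≤ d(a,b) + d(b,c) for all a,b,c ∈ V. Let u, v, x, y, s ∈ V and w ∈ ℝ satisfy d(u,v) = d(u,x) + w + d(y,v) (the edge (x,y) of weight w lies on a shortest path from u to v) and 2·d(x,s) + d(s,y) ≤ 2·w + d(y,s). Set g := d(u,v) + d(v,u). Then d(u,s) + d(s,v) + d(v,u) ≤ 2·g; in particular both d(u,s) + d(s,u) ≤ 2·g and d(v,s) + d(s,v) ≤ 2·g. -/
import Mathlib

/-- Edge-delete-stretch lemma (Lemma 6.5): if the edge `(x,y)` of weight `w` lying on a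
shortest `u → v` path is deleted because of eliminator `s`, then with
`g := d(u,v) + d(v,u)` we have `d(u,s) + d(s,v) + d(v,u) ≤ 2·g`, and in particular
both `d(u⇌s) ≤ 2·g` and `d(v⇌s) ≤ 2·g`. -/
theorem edge_delete_stretch {V : Type*} (d : V → V → ℝ)
    (htri : ∀ a b c : V, d a c ≤ d a b + d b c)
    (u v x y s : V) (w : ℝ)
    (hpath : d u v = d u x + w + d y v)
    (helim : 2 * d x s + d s y ≤ 2 * w + d y s)
    (g : ℝ) (hg : g = d u v + d v u) :
    d u s + d s v + d v u ≤ 2 * g ∧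
      d u s + d s u ≤ 2 * g ∧ d v s + d s v ≤ 2 * g := by
  have h1 := htri u x s
  have h2 := htri s y v
  have h3 := htri y v s
  have h4 := htri v u s
  have h5 := htri u x s
  have h6 := htri s v u
  have h7 := htri v u s
  have key : d u s + d s v + d v u ≤ 2 * g := by nlinarith [htri u x s, htri s y v, htri y v s, htri v u s]
  exact ⟨key, by linarith [htri s v u], by linarith [htri v u s]⟩
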